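/- Let (Ω, ℙ) be a probability space carrying mutually independent random variables Θ, Υ, Z, with Z standard Gaussian and Υ ≥ 0 almost surely. Let L > 0 satisfy ℙ[Υ ≥ L] ≥ L, let τ ≥ σ > 0, and set α = ℙ[|Θ| > 0], assuming α < 1. Then for every t > 0: max{ ℙ[Θ = 0 and τ√Υ|Z| ≥ t], ℙ[|Θ| > 0 and |τ√Υ·Z + Θ| < t] } ≥ ((1−α)/(3−α)) · max{ 2L·Q(t/(σ√L)), ℙ[0 < |Θ| < t/2] }. -/

import Mathlib

open MeasureTheory ProbabilityTheory

/-- Standard Gaussian tail probability `Q(r) = ℙ[ξ > r]` for `ξ ~ N(0,1)`. -/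
noncomputable def gaussQ (r : ℝ) : ℝ :=
  ((gaussianReal 0 1) (Set.Ioi r)).toReal

lemma gaussian_map_neg : (gaussianReal 0 1).map (fun x : ℝ => -x) = gaussianReal 0 1 := by
  have h := gaussianReal_map_const_mul (μ := 0) (v := 1) (-1)
  have h2 : (fun x : ℝ => -x) = ((-1 : ℝ) * ·) := by funext x; ring
  rw [h2, h]
  norm_num

lemma gaussian_neg_preimage {A : Set ℝ} (hA : MeasurableSet A) :
    gaussianReal 0 1 ((fun x : ℝ => -x) ⁻¹' A) = gaussianReal 0 1 A := by
  rw [← Measure.map_apply measurable_neg hA, gaussian_map_neg]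

lemma gaussQ_anti {a b : ℝ} (h : a ≤ b) : gaussQ b ≤ gaussQ a := by
  unfold gaussQ
  exact ENNReal.toReal_mono (measure_ne_top _ _) (measure_mono (Set.Ioi_subset_Ioi h))

lemma gaussQ_nonneg (r : ℝ) : 0 ≤ gaussQ r := ENNReal.toReal_nonneg

lemma gaussian_singleton (r : ℝ) : gaussianReal 0 1 {r} = 0 :=
  gaussianReal_absolutelyContinuous 0 one_ne_zero (measure_singleton r)

lemma gaussian_Ici (r : ℝ) : gaussianReal 0 1 (Set.Ici r) = gaussianReal 0 1 (Set.Ioi r) := by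
  haveI : NullSingletonClass (gaussianReal 0 1) := ⟨gaussian_singleton⟩
  exact (measure_congr Ioi_ae_eq_Ici).symm

lemma gaussian_abs_tail {r : ℝ} (hr : 0 < r) :
    (gaussianReal 0 1 {x : ℝ | r ≤ |x|}).toReal = 2 * gaussQ r := by
  have hset : {x : ℝ | r ≤ |x|} = Set.Iic (-r) ∪ Set.Ici r := by
    ext x
    simp only [Set.mem_setOf_eq, Set.mem_union, Set.mem_Iic, Set.mem_Ici, le_abs, le_neg]
    tauto
  have hdisj : Disjoint (Set.Iic (-r)) (Set.Ici r) := by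
    rw [Set.disjoint_left]
    intro x hx hx'
    simp only [Set.mem_Iic, Set.mem_Ici] at hx hx'
    linarith
  have hIic : gaussianReal 0 1 (Set.Iic (-r)) = gaussianReal 0 1 (Set.Ici r) := by
    have : Set.Iic (-r) = (fun x : ℝ => -x) ⁻¹' (Set.Ici r) := by
      ext x; simp [le_neg]
    rw [this, gaussian_neg_preimage measurableSet_Ici]
  rw [hset, measure_union hdisj measurableSet_Ici, hIic, gaussian_Ici,
    ENNReal.toReal_add (measure_ne_top _ _) (measure_ne_top _ _)]
  unfold gaussQ; ring

set_option maxHeartbeats 1000000 in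
/-- Quantitative core of Proposition 2 (lower bound for thresholded Lasso):
for mutually independent `Θ, Υ, Z` with `Z` standard Gaussian, `Υ ≥ 0`,
`ℙ[Υ ≥ L] ≥ L`, `τ ≥ σ > 0` and `α = ℙ[|Θ| > 0] < 1`, the max of the false
positive and false negative proportions at any threshold `t > 0` is at least
`((1−α)/(3−α)) · max{2L·Q(t/(σ√L)), ℙ[0 < |Θ| < t/2]}`. -/
theorem stmt17 {Ω : Type*} [MeasurableSpace Ω] (μ : Measure Ω) [IsProbabilityMeasure μ]
    (Θ Υ Z : Ω → ℝ) (hΘm : Measurable Θ) (hΥm : Measurable Υ) (hZm : Measurable Z)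
    (hZ : μ.map Z = gaussianReal 0 1)
    (hindep : iIndepFun ![Θ, Υ, Z] μ)
    (hΥ0 : ∀ᵐ ω ∂μ, 0 ≤ Υ ω)
    (L τ σ : ℝ) (hL : 0 < L) (hσ : 0 < σ) (hτσ : σ ≤ τ)
    (hLtail : L ≤ (μ {ω | L ≤ Υ ω}).toReal)
    (α : ℝ) (hα : α = (μ {ω | 0 < |Θ ω|}).toReal) (hα1 : α < 1)
    (t : ℝ) (ht : 0 < t) :
    ((1 - α) / (3 - α)) *
        max (2 * L * gaussQ (t / (σ * Real.sqrt L)))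
          ((μ {ω | 0 < |Θ ω| ∧ |Θ ω| < t / 2}).toReal) ≤
      max ((μ {ω | Θ ω = 0 ∧ t ≤ τ * Real.sqrt (Υ ω) * |Z ω|}).toReal)
        ((μ {ω | 0 < |Θ ω| ∧ |τ * Real.sqrt (Υ ω) * Z ω + Θ ω| < t}).toReal) := by
  have hτ : 0 < τ := lt_of_lt_of_le hσ hτσ
  have hsqrtL : 0 < Real.sqrt L := Real.sqrt_pos.mpr hL
  -- independence facts
  have hmeas3 : ∀ i, Measurable (![Θ, Υ, Z] i) := by
    intro i; fin_cases i <;> simpa using ‹_›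
  set P : Ω → ℝ × ℝ := fun ω => (Υ ω, Z ω) with hPdef
  have hPm : Measurable P := hΥm.prodMk hZm
  have hIndepPair : IndepFun P Θ μ := by
    have := hindep.indepFun_prodMk hmeas3 1 2 0 (by decide) (by decide)
    simpa using this
  have hIndepΥZ : IndepFun Υ Z μ := by
    have := hindep.indepFun (show (1 : Fin 3) ≠ 2 by decide)
    simpa using this
  have hmap : μ.map P = (μ.map Υ).prod (gaussianReal 0 1) := by
    rw [← hZ]
    exact (indepFun_iff_map_prod_eq_prod_map_map hΥm.aemeasurable hZm.aemeasurable).mp hIndepΥZ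
  -- the function and the sets
  set φ : ℝ × ℝ → ℝ := fun q => τ * Real.sqrt q.1 * q.2 with hφdef
  have hφm : Measurable φ := by
    apply Measurable.mul
    · exact (measurable_const.mul (measurable_fst.sqrt))
    · exact measurable_snd
  set Sthr : Set (ℝ × ℝ) := {q : ℝ × ℝ | t ≤ τ * Real.sqrt q.1 * |q.2|} with hSthrdef
  have hSthrm : MeasurableSet Sthr :=
    measurableSet_le measurable_const ((measurable_const.mul (measurable_fst.sqrt)).mul
      measurable_snd.abs)
  set TIoc : Set (ℝ × ℝ) := φ ⁻¹' Set.Ioc (-t) 0 with hTIocdef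
  set TIco : Set (ℝ × ℝ) := φ ⁻¹' Set.Ico 0 t with hTIcodef
  have hTIocm : MeasurableSet TIoc := hφm measurableSet_Ioc
  have hTIcom : MeasurableSet TIco := hφm measurableSet_Ico
  -- real-valued quantities
  set p : ℝ := (μ (P ⁻¹' Sthr)).toReal with hpdef
  set sIoc : ℝ := (μ (P ⁻¹' TIoc)).toReal with hsIocdef
  set sIco : ℝ := (μ (P ⁻¹' TIco)).toReal with hsIcodef
  set bp : ℝ := (μ (Θ ⁻¹' Set.Ioo 0 (t / 2))).toReal with hbpdef
  set bm : ℝ := (μ (Θ ⁻¹' Set.Ioo (-(t / 2)) 0)).toReal with hbmdef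
  set B : ℝ := (μ {ω | 0 < |Θ ω| ∧ |Θ ω| < t / 2}).toReal with hBdef
  set FP : ℝ := (μ {ω | Θ ω = 0 ∧ t ≤ τ * Real.sqrt (Υ ω) * |Z ω|}).toReal with hFPdef
  set FN : ℝ := (μ {ω | 0 < |Θ ω| ∧ |τ * Real.sqrt (Υ ω) * Z ω + Θ ω| < t}).toReal with hFNdef
  set A : ℝ := 2 * L * gaussQ (t / (σ * Real.sqrt L)) with hAdef
  -- basic bounds
  have hprob_le_one : ∀ E : Set Ω, (μ E).toReal ≤ 1 := fun E => by
    simpa using ENNReal.toReal_mono (by simp) (prob_le_one (μ := μ) (s := E))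
  have hα0 : 0 ≤ α := hα ▸ ENNReal.toReal_nonneg
  have hp0 : 0 ≤ p := ENNReal.toReal_nonneg
  have hp1 : p ≤ 1 := hprob_le_one _
  have hB0 : 0 ≤ B := ENNReal.toReal_nonneg
  have hB1 : B ≤ 1 := hprob_le_one _
  have hbp0 : 0 ≤ bp := ENNReal.toReal_nonneg
  have hbm0 : 0 ≤ bm := ENNReal.toReal_nonneg
  -- Step 1 : FP = (1 - α) * p
  have hΘ0set : Θ ⁻¹' {0} = {ω | 0 < |Θ ω|}ᶜ := by
    ext ω; simp [abs_pos]
  have habsm : MeasurableSet {ω | 0 < |Θ ω|} := measurableSet_lt measurable_const hΘm.abs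
  have hFP : FP = (1 - α) * p := by
    have hseteq : {ω | Θ ω = 0 ∧ t ≤ τ * Real.sqrt (Υ ω) * |Z ω|}
        = P ⁻¹' Sthr ∩ Θ ⁻¹' {0} := by
      ext ω
      simp only [Set.mem_setOf_eq, Set.mem_inter_iff, Set.mem_preimage, Set.mem_singleton_iff,
        hSthrdef, hPdef]
      tauto
    have hmul := hIndepPair.measure_inter_preimage_eq_mul _ _ hSthrm (measurableSet_singleton 0)
    have hΘ0 : (μ (Θ ⁻¹' {0})).toReal = 1 - α := by
      rw [hΘ0set, prob_compl_eq_one_sub habsm,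
        ENNReal.toReal_sub_of_le prob_le_one ENNReal.one_ne_top, ENNReal.toReal_one, hα]
    rw [hFPdef, hseteq, hmul, ENNReal.toReal_mul, hΘ0, ← hpdef]
    ring
  -- Step 2 : A ≤ p
  have hA_le_p : A ≤ p := by
    set r : ℝ := t / (τ * Real.sqrt L) with hrdef
    have hr0 : 0 < r := div_pos ht (mul_pos hτ hsqrtL)
    have hrr' : r ≤ t / (σ * Real.sqrt L) := by
      apply div_le_div_of_nonneg_left ht.le (mul_pos hσ hsqrtL)
      exact mul_le_mul_of_nonneg_right hτσ hsqrtL.le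
    have hQ : gaussQ (t / (σ * Real.sqrt L)) ≤ gaussQ r := gaussQ_anti hrr'
    have hincl : Υ ⁻¹' Set.Ici L ∩ Z ⁻¹' {x : ℝ | r ≤ |x|} ⊆ P ⁻¹' Sthr := by
      rintro ω ⟨h1, h2⟩
      simp only [Set.mem_preimage, Set.mem_Ici, Set.mem_setOf_eq] at h1 h2
      simp only [Set.mem_preimage, hSthrdef, Set.mem_setOf_eq, hPdef]
      have hsqrtΥ : Real.sqrt L ≤ Real.sqrt (Υ ω) := Real.sqrt_le_sqrt h1
      have ht' : t = τ * Real.sqrt L * r := by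
        rw [hrdef]; field_simp
      rw [ht']
      apply mul_le_mul
      · exact mul_le_mul_of_nonneg_left hsqrtΥ hτ.le
      · exact h2
      · exact hr0.le
      · positivity
    have hmul := hIndepΥZ.measure_inter_preimage_eq_mul (Set.Ici L) {x : ℝ | r ≤ |x|}
      measurableSet_Ici (measurableSet_le measurable_const measurable_abs)
    have hZmeas : (μ (Z ⁻¹' {x : ℝ | r ≤ |x|})).toReal = 2 * gaussQ r := by
      rw [← gaussian_abs_tail hr0, ← hZ,
        Measure.map_apply hZm (measurableSet_le measurable_const measurable_abs)]
    have hLtailIci : L ≤ (μ (Υ ⁻¹' Set.Ici L)).toReal := hLtail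
    have hineq : L * (2 * gaussQ r) ≤ (μ (Υ ⁻¹' Set.Ici L)).toReal
        * (μ (Z ⁻¹' {x : ℝ | r ≤ |x|})).toReal := by
      rw [hZmeas]
      apply mul_le_mul hLtailIci (le_refl _) (by have := gaussQ_nonneg r; linarith)
        ENNReal.toReal_nonneg
    calc A = 2 * L * gaussQ (t / (σ * Real.sqrt L)) := hAdef
      _ ≤ 2 * L * gaussQ r := by
          apply mul_le_mul_of_nonneg_left hQ (by positivity)
      _ = L * (2 * gaussQ r) := by ring
      _ ≤ (μ (Υ ⁻¹' Set.Ici L)).toReal * (μ (Z ⁻¹' {x : ℝ | r ≤ |x|})).toReal := hineq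
      _ = (μ (Υ ⁻¹' Set.Ici L ∩ Z ⁻¹' {x : ℝ | r ≤ |x|})).toReal := by
          rw [hmul, ENNReal.toReal_mul]
      _ ≤ p := ENNReal.toReal_mono (measure_ne_top _ _) (measure_mono hincl)
  -- Step 3 : symmetry sIoc = sIco
  have hsym : sIoc = sIco := by
    have key : μ (P ⁻¹' TIoc) = μ (P ⁻¹' TIco) := by
      rw [← Measure.map_apply hPm hTIocm, ← Measure.map_apply hPm hTIcom, hmap,
        Measure.prod_apply hTIocm, Measure.prod_apply hTIcom]
      apply lintegral_congr
      intro u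
      have hseteq : Prod.mk u ⁻¹' TIoc = (fun z : ℝ => -z) ⁻¹' (Prod.mk u ⁻¹' TIco) := by
        ext z
        simp only [Set.mem_preimage, hTIocdef, hTIcodef, hφdef, Set.mem_Ioc, Set.mem_Ico,
          mul_neg]
        constructor
        · rintro ⟨h1, h2⟩; constructor <;> linarith
        · rintro ⟨h1, h2⟩; constructor <;> linarith
      rw [hseteq, gaussian_neg_preimage (measurable_prodMk_left hTIcom)]
    rw [hsIocdef, hsIcodef, key]
  -- Step 4 : 1 - p ≤ sIoc + sIco
  have hsum : 1 - p ≤ sIoc + sIco := by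
    have hcompl_sub : (Sthr)ᶜ ⊆ TIoc ∪ TIco := by
      intro q hq
      simp only [Set.mem_compl_iff, hSthrdef, Set.mem_setOf_eq, not_le] at hq
      have habs : |τ * Real.sqrt q.1 * q.2| = τ * Real.sqrt q.1 * |q.2| := by
        rw [abs_mul, abs_of_nonneg (by positivity : (0:ℝ) ≤ τ * Real.sqrt q.1)]
      have hlt : |φ q| < t := by rw [hφdef]; simpa [habs] using hq
      rcases le_or_gt (φ q) 0 with h | h
      · left
        simp only [hTIocdef, Set.mem_preimage, Set.mem_Ioc]
        exact ⟨by cases abs_lt.mp hlt; linarith, h⟩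
      · right
        simp only [hTIcodef, Set.mem_preimage, Set.mem_Ico]
        exact ⟨h.le, by cases abs_lt.mp hlt; linarith⟩
    have h1 : μ ((P ⁻¹' Sthr)ᶜ) ≤ μ (P ⁻¹' TIoc) + μ (P ⁻¹' TIco) := by
      rw [← Set.preimage_compl]
      refine le_trans (measure_mono ?_) (measure_union_le _ _)
      rw [← Set.preimage_union]
      exact Set.preimage_mono hcompl_sub
    have h2 : (μ ((P ⁻¹' Sthr)ᶜ)).toReal = 1 - p := by
      rw [prob_compl_eq_one_sub (hPm hSthrm),
        ENNReal.toReal_sub_of_le prob_le_one ENNReal.one_ne_top, ENNReal.toReal_one, hpdef]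
    calc 1 - p = (μ ((P ⁻¹' Sthr)ᶜ)).toReal := h2.symm
      _ ≤ (μ (P ⁻¹' TIoc) + μ (P ⁻¹' TIco)).toReal := by
          apply ENNReal.toReal_mono _ h1
          exact ENNReal.add_ne_top.mpr ⟨measure_ne_top _ _, measure_ne_top _ _⟩
      _ = sIoc + sIco := ENNReal.toReal_add (measure_ne_top _ _) (measure_ne_top _ _)
  -- Step 5 : B = bp + bm
  have hBsplit : B = bp + bm := by
    have hseteq : {ω | 0 < |Θ ω| ∧ |Θ ω| < t / 2}
        = Θ ⁻¹' Set.Ioo 0 (t / 2) ∪ Θ ⁻¹' Set.Ioo (-(t / 2)) 0 := by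
      ext ω
      simp only [Set.mem_setOf_eq, Set.mem_union, Set.mem_preimage, Set.mem_Ioo, abs_pos,
        abs_lt]
      constructor
      · rintro ⟨hne, h1, h2⟩
        rcases hne.lt_or_gt with h | h
        · right; exact ⟨h1, h⟩
        · left; exact ⟨h, h2⟩
      · rintro (⟨h1, h2⟩ | ⟨h1, h2⟩)
        · exact ⟨ne_of_gt h1, by linarith, h2⟩
        · exact ⟨ne_of_lt h2, h1, by linarith⟩
    have hdisj : Disjoint (Θ ⁻¹' Set.Ioo 0 (t / 2)) (Θ ⁻¹' Set.Ioo (-(t / 2)) 0) := by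
      rw [Set.disjoint_left]
      rintro ω h1 h2
      simp only [Set.mem_preimage, Set.mem_Ioo] at h1 h2
      linarith [h1.1, h2.2]
    rw [hBdef, hseteq, measure_union hdisj (hΘm measurableSet_Ioo),
      ENNReal.toReal_add (measure_ne_top _ _) (measure_ne_top _ _)]
  -- Step 6 : FN lower bound
  have hFN_ge : sIoc * bp + sIco * bm ≤ FN := by
    set Gp : Set Ω := P ⁻¹' TIoc ∩ Θ ⁻¹' Set.Ioo 0 (t / 2) with hGpdef
    set Gm : Set Ω := P ⁻¹' TIco ∩ Θ ⁻¹' Set.Ioo (-(t / 2)) 0 with hGmdef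
    have hsub : Gp ∪ Gm ⊆ {ω | 0 < |Θ ω| ∧ |τ * Real.sqrt (Υ ω) * Z ω + Θ ω| < t} := by
      rintro ω (⟨hg, hθ⟩ | ⟨hg, hθ⟩) <;>
        simp only [Set.mem_preimage, hTIocdef, hTIcodef, hφdef, Set.mem_Ioc, Set.mem_Ico,
          Set.mem_Ioo, hPdef] at hg hθ <;>
        simp only [Set.mem_setOf_eq, abs_pos, abs_lt]
      · exact ⟨ne_of_gt hθ.1, by constructor <;> [linarith [hg.1, hθ.1]; linarith [hg.2, hθ.2]]⟩
      · exact ⟨ne_of_lt hθ.2, by constructor <;> [linarith [hg.1, hθ.1]; linarith [hg.2, hθ.2]]⟩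
    have hdisj : Disjoint Gp Gm := by
      rw [Set.disjoint_left]
      rintro ω ⟨_, h1⟩ ⟨_, h2⟩
      simp only [Set.mem_preimage, Set.mem_Ioo] at h1 h2
      linarith [h1.1, h2.2]
    have hGp : (μ Gp).toReal = sIoc * bp := by
      rw [hGpdef, hIndepPair.measure_inter_preimage_eq_mul _ _ hTIocm measurableSet_Ioo,
        ENNReal.toReal_mul]
    have hGm : (μ Gm).toReal = sIco * bm := by
      rw [hGmdef, hIndepPair.measure_inter_preimage_eq_mul _ _ hTIcom measurableSet_Ioo,
        ENNReal.toReal_mul]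
    calc sIoc * bp + sIco * bm = (μ Gp).toReal + (μ Gm).toReal := by rw [hGp, hGm]
      _ = (μ (Gp ∪ Gm)).toReal := by
          rw [measure_union hdisj ((hPm hTIcom).inter (hΘm measurableSet_Ioo)),
            ENNReal.toReal_add (measure_ne_top _ _) (measure_ne_top _ _)]
      _ ≤ FN := ENNReal.toReal_mono (measure_ne_top _ _) (measure_mono hsub)
  -- Step 7 : final arithmetic
  have h3 : 0 < 3 - α := by linarith
  have hc0 : 0 ≤ (1 - α) / (3 - α) := div_nonneg (by linarith) h3.le
  have hFPle : FP ≤ max FP FN := le_max_left _ _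
  have hFNle : FN ≤ max FP FN := le_max_right _ _
  have hA0 : 0 ≤ A := by
    rw [hAdef]
    exact mul_nonneg (by positivity) (gaussQ_nonneg _)
  rcases max_choice A B with h | h <;> rw [h]
  · -- case max = A
    have h1 : (1 - α) / (3 - α) * A ≤ (1 - α) * A := by
      apply mul_le_mul_of_nonneg_right _ hA0
      exact div_le_self (by linarith) (by linarith)
    have h2 : (1 - α) * A ≤ (1 - α) * p :=
      mul_le_mul_of_nonneg_left hA_le_p (by linarith)
    calc (1 - α) / (3 - α) * A ≤ (1 - α) * p := le_trans h1 h2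
      _ = FP := hFP.symm
      _ ≤ max FP FN := hFPle
  · -- case max = B
    by_cases hcase : B ≤ (3 - α) * p
    · have h1 : (1 - α) / (3 - α) * B ≤ (1 - α) * p := by
        rw [div_mul_eq_mul_div, div_le_iff₀ h3]
        nlinarith [mul_le_mul_of_nonneg_left hcase (show (0:ℝ) ≤ 1 - α by linarith)]
      calc (1 - α) / (3 - α) * B ≤ (1 - α) * p := h1
        _ = FP := hFP.symm
        _ ≤ max FP FN := hFPle
    · push_neg at hcase
      have hsIoc_ge : (1 - p) / 2 ≤ sIoc := by
        rw [hsym] at hsum ⊢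
        linarith
      have hkey : (1 - α) / (3 - α) ≤ (1 - p) / 2 := by
        rw [div_le_div_iff₀ h3 (by norm_num : (0:ℝ) < 2)]
        nlinarith [hcase, hB1]
      calc (1 - α) / (3 - α) * B ≤ (1 - p) / 2 * B := mul_le_mul_of_nonneg_right hkey hB0
        _ ≤ sIoc * B := mul_le_mul_of_nonneg_right hsIoc_ge hB0
        _ = sIoc * bp + sIco * bm := by rw [hBsplit, ← hsym]; ring
        _ ≤ FN := hFN_ge
        _ ≤ max FP FN := hFNle
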